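/- Define T by T_0 = 1 and T_{k+1} = (1 + 2T_k + sqrt(1 + 4T_k))/2. Then for every k ≥ 0, (∑_{i=0}^{k} T_i)/T_k ≤ k/3 + log(k+2)/6 + 1. -/

import Mathlib

theorem stmt_13 (T : ℕ → ℝ) (hT0 : T 0 = 1)
    (hTrec : ∀ k : ℕ, T (k+1) = (1 + 2 * T k + Real.sqrt (1 + 4 * T k)) / 2) :
    ∀ k : ℕ,
      (∑ i ∈ Finset.range (k+1), T i) / T k ≤ (k : ℝ) / 3 + Real.log ((k : ℝ) + 2) / 6 + 1 := by
  -- Lower bound: T k ≥ ((k+2)/2)^2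
  have hpos : ∀ k : ℕ, ((k:ℝ)+2)^2/4 ≤ T k := by
    intro k
    induction k with
    | zero => simp [hT0]; norm_num
    | succ k ih =>
      have hTk : (0:ℝ) < T k := lt_of_lt_of_le (by positivity) ih
      have h1 : ((k:ℝ)+2) ≤ Real.sqrt (1 + 4 * T k) := by
        have h2 : ((k:ℝ)+2)^2 ≤ 1 + 4 * T k := by nlinarith
        calc ((k:ℝ)+2) = Real.sqrt (((k:ℝ)+2)^2) := (Real.sqrt_sq (by positivity)).symm
          _ ≤ Real.sqrt (1 + 4 * T k) := Real.sqrt_le_sqrt h2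
      rw [hTrec k]
      push_cast
      nlinarith
  have hTpos : ∀ k : ℕ, 0 < T k := fun k => lt_of_lt_of_le (by positivity) (hpos k)
  have hsle : ∀ k : ℕ, ((k:ℝ)+2)/2 ≤ Real.sqrt (T k) := by
    intro k
    calc ((k:ℝ)+2)/2 = Real.sqrt ((((k:ℝ)+2)/2)^2) := (Real.sqrt_sq (by positivity)).symm
      _ ≤ Real.sqrt (T k) := Real.sqrt_le_sqrt (by nlinarith [hpos k])
  -- identity: sqrt (T (k+1)) = (1 + sqrt(1+4 T k))/2 and T (k+1) = T k + sqrt (T (k+1))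
  have hd : ∀ k : ℕ, Real.sqrt (T (k+1)) = (1 + Real.sqrt (1 + 4 * T k)) / 2 := by
    intro k
    have hs2 : (Real.sqrt (1 + 4 * T k))^2 = 1 + 4 * T k :=
      Real.sq_sqrt (by nlinarith [hTpos k])
    have h1 : T (k+1) = ((1 + Real.sqrt (1 + 4 * T k)) / 2)^2 := by
      rw [hTrec k]
      linear_combination (-1/4 : ℝ) * hs2
    rw [h1, Real.sqrt_sq (by positivity)]
  have hstep : ∀ k : ℕ, T (k+1) = T k + Real.sqrt (T (k+1)) := by
    intro k
    rw [hd k, hTrec k]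
    ring
  -- Upper bound
  have hub : ∀ k : ℕ, Real.sqrt (T k) ≤ 1 + (k:ℝ)/2 + Real.log ((k:ℝ)+1) / 4 := by
    intro k
    induction k with
    | zero => simp [hT0]
    | succ k ih =>
      rw [hd k]
      have hu2 : (Real.sqrt (T k))^2 = T k := Real.sq_sqrt (hTpos k).le
      have hul : ((k:ℝ)+2)/2 ≤ Real.sqrt (T k) := hsle k
      have hupos : 0 < Real.sqrt (T k) := lt_of_lt_of_le (by positivity) hul
      set u := Real.sqrt (T k) with hu
      have hs : Real.sqrt (1 + 4 * T k) ≤ 2*u + 1/(4*u) := by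
        have hsq : (1 + 4 * T k) ≤ (2*u + 1/(4*u))^2 := by
          have he : (2*u + 1/(4*u))^2 = 4*u^2 + 1 + 1/(16*u^2) := by
            field_simp; ring
          rw [he, hu2]
          have h0 : (0:ℝ) < 1/(16*T k) := by
            have := hTpos k
            positivity
          linarith
        calc Real.sqrt (1 + 4 * T k) ≤ Real.sqrt ((2*u + 1/(4*u))^2) := Real.sqrt_le_sqrt hsq
          _ = 2*u + 1/(4*u) := Real.sqrt_sq (by positivity)
      have h8 : 1/(4*u) ≤ 1/(2*((k:ℝ)+2)) := by
        rw [div_le_div_iff₀ (by positivity) (by positivity)]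
        linarith
      have hlog : 1/((k:ℝ)+2) ≤ Real.log ((k:ℝ)+2) - Real.log ((k:ℝ)+1) := by
        have hx : (0:ℝ) < ((k:ℝ)+1)/((k:ℝ)+2) := by positivity
        have h := Real.log_le_sub_one_of_pos hx
        rw [Real.log_div (by positivity) (by positivity)] at h
        have he : ((k:ℝ)+1)/((k:ℝ)+2) - 1 = -(1/((k:ℝ)+2)) := by
          field_simp
          norm_num
        rw [he] at h
        linarith
      push_cast
      have : (1 + (2*u + 1/(4*u))) / 2 ≤ u + 1/2 + 1/(4*((k:ℝ)+2)) := by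
        have : 1/(4*((k:ℝ)+2)) = (1/(2*((k:ℝ)+2)))/2 := by
          field_simp
          ring
        rw [this]
        linarith
      calc (1 + Real.sqrt (1 + 4 * T k)) / 2 ≤ (1 + (2*u + 1/(4*u))) / 2 := by linarith
        _ ≤ u + 1/2 + 1/(4*((k:ℝ)+2)) := this
        _ ≤ 1 + ((k:ℝ)+1)/2 + Real.log ((k:ℝ)+1+1) / 4 := by
            have h4 : 1/(4*((k:ℝ)+2)) = (1/((k:ℝ)+2))/4 := by
              field_simp
            rw [h4]
            have : Real.log ((k:ℝ)+1+1) = Real.log ((k:ℝ)+2) := by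
              congr 1
              ring
            rw [this]
            linarith
  -- Main induction
  have main : ∀ k : ℕ, (∑ i ∈ Finset.range (k+1), T i)
      ≤ ((k:ℝ)/3 + Real.log ((k:ℝ)+2)/6 + 1) * T k := by
    intro k
    induction k with
    | zero =>
      simp [hT0]
      have := Real.log_nonneg (by norm_num : (1:ℝ) ≤ 2)
      linarith
    | succ k ih =>
      rw [Finset.sum_range_succ]
      set d := Real.sqrt (T (k+1)) with hdd
      have hd2 : d^2 = T (k+1) := Real.sq_sqrt (hTpos (k+1)).le
      have hTk : T k = d^2 - d := by
        have := hstep k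
        linarith [hd2.symm ▸ this]
      have hdl : ((k:ℝ)+3)/2 ≤ d := by
        have := hsle (k+1); push_cast at this; linarith
      have hdu : d ≤ 1 + ((k:ℝ)+1)/2 + Real.log ((k:ℝ)+2) / 4 := by
        have := hub (k+1); push_cast at this
        have he : (k:ℝ)+1+1 = (k:ℝ)+2 := by ring
        rw [he] at this
        linarith
      have hd0 : (0:ℝ) < d := lt_of_lt_of_le (by positivity) hdl
      have hlog : 1/((k:ℝ)+3) ≤ Real.log ((k:ℝ)+3) - Real.log ((k:ℝ)+2) := by
        have hx : (0:ℝ) < ((k:ℝ)+2)/((k:ℝ)+3) := by positivity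
        have h := Real.log_le_sub_one_of_pos hx
        rw [Real.log_div (by positivity) (by positivity)] at h
        have he : ((k:ℝ)+2)/((k:ℝ)+3) - 1 = -(1/((k:ℝ)+3)) := by
          field_simp
          norm_num
        rw [he] at h
        linarith
      -- key: (2/3 - Δ/6) * d ≤ f k  where Δ = log(k+3) - log(k+2)
      have hΔd : (1:ℝ)/12 ≤ ((Real.log ((k:ℝ)+3) - Real.log ((k:ℝ)+2))/6) * d := by
        have h1 : (1/((k:ℝ)+3))/6 * (((k:ℝ)+3)/2)
            ≤ ((Real.log ((k:ℝ)+3) - Real.log ((k:ℝ)+2))/6) * d := by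
          have hΔnn : (0:ℝ) ≤ (Real.log ((k:ℝ)+3) - Real.log ((k:ℝ)+2))/6 := by
            have h0 : (0:ℝ) ≤ 1/((k:ℝ)+3) := by positivity
            linarith
          apply mul_le_mul (by linarith) hdl (by positivity) hΔnn
        have h2 : (1/((k:ℝ)+3))/6 * (((k:ℝ)+3)/2) = 1/12 := by
          field_simp
          ring
        linarith [h2 ▸ h1]
      have hkey : (2/3 - (Real.log ((k:ℝ)+3) - Real.log ((k:ℝ)+2))/6) * d
          ≤ (k:ℝ)/3 + Real.log ((k:ℝ)+2)/6 + 1 := by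
        have h23 : (2:ℝ)/3 * d ≤ 2/3 * (1 + ((k:ℝ)+1)/2 + Real.log ((k:ℝ)+2) / 4) := by
          linarith
        nlinarith [hΔd]
      have hmul : 0 ≤ (((k:ℝ)/3 + Real.log ((k:ℝ)+2)/6 + 1)
          - (2/3 - (Real.log ((k:ℝ)+3) - Real.log ((k:ℝ)+2))/6) * d) * d :=
        mul_nonneg (by linarith) hd0.le
      push_cast
      have hg : ((k:ℝ)+1+2) = (k:ℝ)+3 := by ring
      rw [hg, ← hd2]
      rw [hTk] at ih
      nlinarith [hmul, ih]
  intro k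
  rw [div_le_iff₀ (hTpos k)]
  exact main k
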